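/- Shannon capacity upper bound: Let p be an odd prime, n = 4p - 1, and let G be the graph H_n (binary strings of length n with even Hamming weight, adjacent iff Hamming distance (n+1)/2 = 2p). Then for every k ≥ 1, α(G^{⊠k}) ≤ (C(n,0) + C(n,1) + ... + C(n,p-1))^k. -/

import Mathlib

/-- The graph `H_n`. -/
def Hn (n : ℕ) :
    SimpleGraph {x : Fin n → Bool // Even (hammingDist x (fun _ => false))} :=
  SimpleGraph.fromRel (fun x y => hammingDist x.1 y.1 = (n + 1) / 2)

/-- The `k`-fold strong graph power of `G`. -/
def strongPow {V : Type*} (G : SimpleGraph V) (k : ℕ) : SimpleGraph (Fin k → V) where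
  Adj x y := x ≠ y ∧ ∀ i, x i = y i ∨ G.Adj (x i) (y i)
  symm := ⟨by
    rintro x y ⟨hne, h⟩
    exact ⟨fun he => hne he.symm, fun i => (h i).imp Eq.symm (G.adj_symm ·)⟩⟩
  loopless := ⟨fun x h => h.1 rfl⟩

noncomputable section FW

open Finset Submodule

/-- vertices of `H_n` -/
abbrev Vtx (n : ℕ) := {x : Fin n → Bool // Even (hammingDist x (fun _ => false))}

variable {n p : ℕ}

/-- monomial function -/
def chi (p : ℕ) (S : Finset (Fin n)) : Vtx n → ZMod p :=
  fun v => ∏ i ∈ S, (if v.1 i then (1 : ZMod p) else 0)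

/-- span of monomials of degree at most `d` -/
def LL (p n d : ℕ) : Submodule (ZMod p) (Vtx n → ZMod p) :=
  span (ZMod p) {f | ∃ S : Finset (Fin n), S.card ≤ d ∧ f = chi p S}

lemma chi_mem_LL {S : Finset (Fin n)} {d : ℕ} (h : S.card ≤ d) : chi p S ∈ LL p n d :=
  subset_span ⟨S, h, rfl⟩

lemma LL_mono {d e : ℕ} (h : d ≤ e) : LL p n d ≤ LL p n e :=
  span_mono (fun f ⟨S, hS, hf⟩ => ⟨S, hS.trans h, hf⟩)

lemma idem_prod_mul (a : Fin n → ZMod p) (ha : ∀ i, a i * a i = a i)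
    (S T : Finset (Fin n)) :
    (∏ i ∈ S, a i) * ∏ i ∈ T, a i = ∏ i ∈ S ∪ T, a i := by
  classical
  induction S using Finset.induction_on with
  | empty => simp
  | insert _ _ hi ih =>
    rename_i j S
    rw [Finset.prod_insert hi, mul_assoc, ih, Finset.insert_union]
    by_cases h : j ∈ S ∪ T
    · rw [Finset.insert_eq_self.2 h, ← Finset.mul_prod_erase _ _ h, ← mul_assoc, ha]
    · rw [Finset.prod_insert h]

lemma chi_mul (S T : Finset (Fin n)) : chi p S * chi p T = chi (n := n) p (S ∪ T) := by
  funext v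
  exact idem_prod_mul _ (fun i => by by_cases h : v.1 i <;> simp [h]) S T

lemma chi_mul_mem {S : Finset (Fin n)} {d e : ℕ} (hS : S.card ≤ d)
    {g : Vtx n → ZMod p} (hg : g ∈ LL p n e) : chi p S * g ∈ LL p n (d + e) := by
  induction hg using span_induction with
  | mem f hf =>
    obtain ⟨T, hT, rfl⟩ := hf
    rw [chi_mul]
    exact chi_mem_LL ((Finset.card_union_le S T).trans (Nat.add_le_add hS hT))
  | zero => simpa using (LL p n (d + e)).zero_mem
  | add f g _ _ hf hg => rw [mul_add]; exact add_mem hf hg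
  | smul c f _ hf => rw [mul_smul_comm]; exact smul_mem _ c hf

lemma LL_mul {f g : Vtx n → ZMod p} {d e : ℕ} (hf : f ∈ LL p n d) (hg : g ∈ LL p n e) :
    f * g ∈ LL p n (d + e) := by
  induction hf using span_induction with
  | mem f hf => obtain ⟨S, hS, rfl⟩ := hf; exact chi_mul_mem hS hg
  | zero => simpa using (LL p n (d + e)).zero_mem
  | add f f' _ _ hf hf' => rw [add_mul]; exact add_mem hf hf'
  | smul c f _ hf => rw [smul_mul_assoc]; exact smul_mem _ c hf

lemma const_mem_LL (c : ZMod p) (d : ℕ) : (fun _ : Vtx n => c) ∈ LL p n d := by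
  have : (fun _ : Vtx n => c) = c • chi p (∅ : Finset (Fin n)) := by
    funext v; simp [chi]
  rw [this]
  exact smul_mem _ c (chi_mem_LL (by simp))

lemma prod_mem_LL {ι : Type*} (s : Finset ι) (f : ι → Vtx n → ZMod p)
    (h : ∀ t ∈ s, f t ∈ LL p n 1) : (∏ t ∈ s, f t) ∈ LL p n s.card := by
  classical
  induction s using Finset.induction_on with
  | empty => simp only [Finset.prod_empty, Finset.card_empty]; exact const_mem_LL (1 : ZMod p) 0
  | insert _ _ hi ih =>
    rename_i j s
    rw [Finset.prod_insert hi, Finset.card_insert_of_notMem hi]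
    have := LL_mul (h j (Finset.mem_insert_self j s))
      (ih (fun t ht => h t (Finset.mem_insert_of_mem ht)))
    simpa [Nat.add_comm] using this

/-- the cast-of-Hamming-distance function is in degree 1 span -/
lemma dist_mem_LL (a : Vtx n) :
    (fun b : Vtx n => (hammingDist a.1 b.1 : ZMod p)) ∈ LL p n 1 := by
  classical
  have hrw : (fun b : Vtx n => (hammingDist a.1 b.1 : ZMod p)) =
      fun b : Vtx n => ∑ i : Fin n, (if a.1 i ≠ b.1 i then (1 : ZMod p) else 0) := by
    funext b
    rw [hammingDist, Finset.card_filter]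
    push_cast
    rfl
  rw [hrw]
  have : (fun b : Vtx n => ∑ i : Fin n, (if a.1 i ≠ b.1 i then (1 : ZMod p) else 0)) =
      ∑ i : Fin n, (fun b : Vtx n => (if a.1 i ≠ b.1 i then (1 : ZMod p) else 0)) := by
    funext b; simp
  rw [this]
  refine sum_mem (fun i _ => ?_)
  by_cases h : a.1 i
  · have : (fun b : Vtx n => (if a.1 i ≠ b.1 i then (1 : ZMod p) else 0)) =
        (fun _ : Vtx n => (1 : ZMod p)) - chi p {i} := by
      funext b
      by_cases hb : b.1 i <;> simp [chi, h, hb]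
    rw [this]
    exact sub_mem (const_mem_LL 1 1) (chi_mem_LL (by simp))
  · have : (fun b : Vtx n => (if a.1 i ≠ b.1 i then (1 : ZMod p) else 0)) = chi p {i} := by
      funext b
      by_cases hb : b.1 i <;> simp [chi, h, hb]
    rw [this]
    exact chi_mem_LL (by simp)

/-- the Frankl–Wilson polynomial function attached to a vertex -/
def Qfun (p : ℕ) (a : Vtx n) : Vtx n → ZMod p :=
  fun b => ∏ t ∈ Finset.Icc 1 (p - 1), ((hammingDist a.1 b.1 : ZMod p) - (t : ZMod p))

lemma Qfun_mem_LL (a : Vtx n) : Qfun p a ∈ LL p n (p - 1) := by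
  have : Qfun p a = ∏ t ∈ Finset.Icc 1 (p - 1),
      (fun b : Vtx n => ((hammingDist a.1 b.1 : ZMod p) - (t : ZMod p))) := by
    funext b; simp [Qfun]
  rw [this]
  have := prod_mem_LL (Finset.Icc 1 (p - 1))
    (fun t => (fun b : Vtx n => ((hammingDist a.1 b.1 : ZMod p) - (t : ZMod p))))
    (fun t _ => sub_mem (dist_mem_LL a) (const_mem_LL _ 1))
  simpa [Nat.card_Icc] using this

lemma Qfun_self (hp : p.Prime) (a : Vtx n) : Qfun p a a ≠ 0 := by
  haveI : Fact p.Prime := ⟨hp⟩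
  rw [Qfun]
  rw [Finset.prod_ne_zero_iff]
  intro t ht
  rw [Finset.mem_Icc] at ht
  simp only [hammingDist_self, Nat.cast_zero, zero_sub, neg_ne_zero]
  intro h
  rw [ZMod.natCast_eq_zero_iff] at h
  have := Nat.le_of_dvd (by omega) h
  omega

lemma Qfun_vanish (hp : p.Prime) {a b : Vtx n} (h : ¬ p ∣ hammingDist a.1 b.1) :
    Qfun p a b = 0 := by
  set d := hammingDist a.1 b.1 with hd
  have hp1 : 1 ≤ p := hp.one_lt.le.trans' (by omega)
  have hr0 : d % p ≠ 0 := fun h0 => h (Nat.dvd_of_mod_eq_zero h0)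
  have hrp : d % p < p := Nat.mod_lt _ hp.pos
  refine Finset.prod_eq_zero (i := d % p) (Finset.mem_Icc.2 ⟨by omega, by omega⟩) ?_
  rw [sub_eq_zero]
  exact (ZMod.natCast_mod d p).symm

/-- parity of the Hamming distance -/
lemma even_hammingDist (a b : Vtx n) : Even (hammingDist a.1 b.1) := by
  classical
  have key : ∀ x y : Bool, (if x ≠ y then (1:ℕ) else 0) +
      2 * (if x = true ∧ y = true then (1:ℕ) else 0)
      = (if x ≠ false then (1:ℕ) else 0) + (if y ≠ false then (1:ℕ) else 0) := by
    decide
  have hsum : hammingDist a.1 b.1 + 2 * #{i : Fin n | a.1 i = true ∧ b.1 i = true} =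
      hammingDist a.1 (fun _ => false) + hammingDist b.1 (fun _ => false) := by
    simp only [hammingDist, Finset.card_filter]
    rw [Finset.mul_sum, ← Finset.sum_add_distrib, ← Finset.sum_add_distrib]
    exact Finset.sum_congr rfl (fun i _ => key (a.1 i) (b.1 i))
  obtain ⟨u, hu⟩ := a.2
  obtain ⟨v, hv⟩ := b.2
  exact ⟨u + v - #{i : Fin n | a.1 i = true ∧ b.1 i = true}, by omega⟩

section Tensor

variable {k : ℕ}

/-- span of tensor monomials over a finset of coordinates -/
def TLu (p n : ℕ) (k : ℕ) (u : Finset (Fin k)) (d : ℕ) :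
    Submodule (ZMod p) ((Fin k → Vtx n) → ZMod p) :=
  span (ZMod p) {g | ∃ S : Fin k → Finset (Fin n), (∀ j, (S j).card ≤ d) ∧
    g = fun y => ∏ j ∈ u, chi p (S j) (y j)}

lemma comb_mem_TLu {u : Finset (Fin k)} {j : Fin k} (hj : j ∉ u) {d : ℕ}
    {h : Vtx n → ZMod p} (hh : h ∈ LL p n d)
    {g : (Fin k → Vtx n) → ZMod p} (hg : g ∈ TLu p n k u d) :
    (fun y => h (y j) * g y) ∈ TLu p n k (insert j u) d := by
  classical
  induction hh using span_induction with
  | mem f hf =>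
    obtain ⟨S, hS, rfl⟩ := hf
    induction hg using span_induction with
    | mem g hgm =>
      obtain ⟨S', hS', rfl⟩ := hgm
      refine subset_span ⟨Function.update S' j S, ?_, ?_⟩
      · intro j'
        by_cases hjj : j' = j
        · subst hjj; simp [Function.update_self, hS]
        · simp [Function.update_of_ne hjj, hS' j']
      · funext y
        rw [Finset.prod_insert hj]
        congr 1
        · simp [Function.update_self]
        · exact Finset.prod_congr rfl (fun j' hj' => by
            rw [Function.update_of_ne (by rintro rfl; exact hj hj')])
    | zero =>
      convert (TLu p n k (insert j u) d).zero_mem using 1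
      funext y; simp
    | add g g' _ _ hg hg' =>
      have : (fun y => chi p S (y j) * (g + g') y) =
          (fun y => chi p S (y j) * g y) + (fun y => chi p S (y j) * g' y) := by
        funext y; simp; ring
      rw [this]; exact add_mem hg hg'
    | smul c g _ hg =>
      have : (fun y => chi p S (y j) * (c • g) y) =
          c • (fun y => chi p S (y j) * g y) := by
        funext y; simp; ring
      rw [this]; exact smul_mem _ c hg
  | zero =>
    convert (TLu p n k (insert j u) d).zero_mem using 1
    funext y; simp
  | add f f' _ _ hf hf' =>
    have : (fun y => (f + f') (y j) * g y) =
        (fun y => f (y j) * g y) + (fun y => f' (y j) * g y) := by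
      funext y; simp; ring
    rw [this]; exact add_mem hf hf'
  | smul c f _ hf =>
    have : (fun y => (c • f) (y j) * g y) = c • (fun y => f (y j) * g y) := by
      funext y; simp; ring
    rw [this]; exact smul_mem _ c hf

lemma tensor_mem_TLu {d : ℕ} (f : Fin k → Vtx n → ZMod p)
    (hf : ∀ j, f j ∈ LL p n d) (u : Finset (Fin k)) :
    (fun y => ∏ j ∈ u, f j (y j)) ∈ TLu p n k u d := by
  classical
  induction u using Finset.induction_on with
  | empty =>
    refine subset_span ⟨fun _ => ∅, by simp, ?_⟩
    funext y; simp
  | insert _ _ hi ih =>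
    rename_i j u
    have : (fun y : Fin k → Vtx n => ∏ j' ∈ insert j u, f j' (y j')) =
        (fun y => f j (y j) * ∏ j' ∈ u, f j' (y j')) := by
      funext y; rw [Finset.prod_insert hi]
    rw [this]
    exact comb_mem_TLu hi (hf j) ih

end Tensor

theorem stmt_aux (p n : ℕ) (hp : p.Prime) (hodd : Odd p) (hn : n = 4 * p - 1)
    (k : ℕ)
    (s : Finset (Fin k → Vtx n))
    (hs : ∀ x ∈ s, ∀ y ∈ s, x ≠ y → ¬(strongPow (Hn n) k).Adj x y) :
    s.card ≤ (∑ i ∈ Finset.range p, n.choose i) ^ k := by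
  classical
  haveI : Fact p.Prime := ⟨hp⟩
  have hp3 : 3 ≤ p := by
    have h2 := hp.two_le
    rcases eq_or_lt_of_le h2 with h | h
    · exfalso; rw [← h] at hodd; exact (by decide : ¬ Odd 2) hodd
    · omega
  have hn1 : n + 1 = 4 * p := by omega
  let ι := Fin k → {S : Finset (Fin n) // S.card ≤ p - 1}
  let m : ι → ((Fin k → Vtx n) → ZMod p) := fun S => fun y => ∏ j, chi p (S j).1 (y j)
  have hTL : TLu p n k Finset.univ (p - 1) ≤ span (ZMod p) (Set.range m) := by
    apply span_le.2
    rintro g ⟨S, hS, rfl⟩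
    exact subset_span ⟨fun j => ⟨S j, hS j⟩, rfl⟩
  let P : (Fin k → Vtx n) → ((Fin k → Vtx n) → ZMod p) :=
    fun x => fun y => ∏ j, Qfun p (x j) (y j)
  have hPmem : ∀ x, P x ∈ span (ZMod p) (Set.range m) := fun x =>
    hTL (tensor_mem_TLu (fun j => Qfun p (x j)) (fun j => Qfun_mem_LL (x j)) Finset.univ)
  have hPself : ∀ x, P x x ≠ 0 := by
    intro x
    rw [Finset.prod_ne_zero_iff]
    exact fun j _ => Qfun_self hp (x j)
  have hPvanish : ∀ x ∈ s, ∀ y ∈ s, x ≠ y → P x y = 0 := by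
    intro x hx y hy hxy
    have hna := hs x hx y hy hxy
    change ¬ (x ≠ y ∧ ∀ i, x i = y i ∨ (Hn n).Adj (x i) (y i)) at hna
    simp only [not_and, not_forall] at hna
    obtain ⟨j, hj⟩ := hna hxy
    rw [not_or] at hj
    obtain ⟨hne, hnadj⟩ := hj
    refine Finset.prod_eq_zero (Finset.mem_univ j) ?_
    apply Qfun_vanish hp
    set d := hammingDist (x j).1 (y j).1 with hd
    have hd0 : d ≠ 0 := by
      intro h0
      exact hne (Subtype.ext ((hammingDist_eq_zero).1 h0))
    have hdle : d ≤ n := hammingDist_le_card_fintype.trans (by simp)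
    have hdev : Even d := even_hammingDist (x j) (y j)
    have hdne : d ≠ 2 * p := by
      intro h2p
      apply hnadj
      rw [Hn, SimpleGraph.fromRel_adj]
      exact ⟨hne, Or.inl (by omega)⟩
    intro hdvd
    obtain ⟨c, hc⟩ := hdvd
    have hc0 : c ≠ 0 := by
      rintro rfl
      rw [Nat.mul_zero] at hc
      exact hd0 hc
    have hcodd : ¬ Odd c := by
      intro hco
      have := hodd.mul hco
      rw [← hc] at this
      exact (Nat.not_odd_iff_even.2 hdev) this
    obtain ⟨c', hc'⟩ := Nat.not_odd_iff_even.1 hcodd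
    have hc'0 : c' ≠ 0 := by rintro rfl; exact hc0 (by omega)
    have hle : c' ≤ 1 := by
      by_contra hgt
      push_neg at hgt
      have : 4 * p ≤ d := by
        calc 4 * p = p * 4 := by ring
        _ ≤ p * (c' + c') := by
              apply Nat.mul_le_mul_left
              omega
        _ = p * c := by rw [hc']
        _ = d := hc.symm
      omega
    have hc1 : c' = 1 := by omega
    apply hdne
    rw [hc, hc', hc1]
    ring
  have hLI : LinearIndependent (ZMod p) (fun x : ↥s => P x.1) := by
    rw [linearIndependent_iff']
    intro t g hg i hi
    have hev := congrFun hg i.1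
    rw [Finset.sum_apply] at hev
    rw [Finset.sum_eq_single i] at hev
    · simp only [Pi.smul_apply, smul_eq_mul, Pi.zero_apply] at hev
      rcases mul_eq_zero.1 hev with h | h
      · exact h
      · exact absurd h (hPself i.1)
    · intro x _ hxi
      simp only [Pi.smul_apply, smul_eq_mul]
      rw [hPvanish x.1 x.2 i.1 i.2 (fun hc => hxi (Subtype.ext hc)), mul_zero]
    · intro h; exact absurd hi h
  haveI : FiniteDimensional (ZMod p) (span (ZMod p) (Set.range m)) :=
    FiniteDimensional.span_of_finite _ (Set.finite_range m)
  let v : ↥s → span (ZMod p) (Set.range m) := fun x => ⟨P x.1, hPmem x.1⟩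
  have hLIv : LinearIndependent (ZMod p) v := by
    apply LinearIndependent.of_comp (span (ZMod p) (Set.range m)).subtype
    exact hLI
  have hcard1 : s.card ≤ Module.finrank (ZMod p) (span (ZMod p) (Set.range m)) := by
    have := hLIv.fintype_card_le_finrank
    simpa using this
  have hcard2 : Module.finrank (ZMod p) (span (ZMod p) (Set.range m)) ≤ Fintype.card ι := by
    refine (finrank_span_le_card _).trans ?_
    rw [Set.toFinset_range]
    exact (Finset.card_image_le).trans (by simp)
  have hcount : Fintype.card {S : Finset (Fin n) // S.card ≤ p - 1} =
      ∑ i ∈ Finset.range p, n.choose i := by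
    rw [Fintype.card_subtype]
    have hset : (Finset.univ.filter fun S : Finset (Fin n) => S.card ≤ p - 1) =
        (Finset.range p).biUnion (fun i => Finset.powersetCard i Finset.univ) := by
      ext S
      simp only [Finset.mem_filter, Finset.mem_univ, true_and, Finset.mem_biUnion,
        Finset.mem_range, Finset.mem_powersetCard_univ]
      constructor
      · intro h; exact ⟨S.card, by omega, rfl⟩
      · rintro ⟨i, hi, rfl⟩; omega
    rw [hset, Finset.card_biUnion]
    · refine Finset.sum_congr rfl (fun i _ => ?_)
      rw [Finset.card_powersetCard]
      simp
    · intro i _ j _ hij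
      simp only [Finset.disjoint_left, Finset.mem_powersetCard_univ]
      intro S h1 h2
      exact hij (h1.symm.trans h2)
  have hι : Fintype.card ι = (∑ i ∈ Finset.range p, n.choose i) ^ k := by
    rw [Fintype.card_fun, hcount, Fintype.card_fin]
  calc s.card ≤ Fintype.card ι := hcard1.trans hcard2
    _ = _ := hι

end FW

theorem stmt_17 (p n : ℕ) (hp : p.Prime) (hodd : Odd p) (hn : n = 4 * p - 1)
    (k : ℕ) (hk : 1 ≤ k)
    (s : Finset (Fin k → {x : Fin n → Bool // Even (hammingDist x (fun _ => false))}))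
    (hs : ∀ x ∈ s, ∀ y ∈ s, x ≠ y → ¬(strongPow (Hn n) k).Adj x y) :
    s.card ≤ (∑ i ∈ Finset.range p, n.choose i) ^ k :=
  stmt_aux p n hp hodd hn k s hs
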